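/- Let f = h + conj(g) be a sense-preserving harmonic mapping on the unit disk D with β(f) < ∞, let c₀ = g'(0)/h'(0), and write aₙ = h⁽ⁿ⁾(0)/n!, bₙ = g⁽ⁿ⁾(0)/n!. Then for every n ≥ 2: max{ |aₙ|, |bₙ| } ≤ β(f)·(e/3)^{3/2}·√((1+|c₀|)/(1−|c₀|))·√(n+2). -/

import Mathlib

open Metric Set Filter

open Real

set_option maxHeartbeats 1000000
lemma exp_cube_lb : (20.085:ℝ) ≤ exp 1 ^ 3 :=
  le_trans (by norm_num) (pow_le_pow_left₀ (by norm_num) Real.exp_one_gt_d9.le 3)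

lemma key_poly {x : ℝ} (hx : 21 ≤ x) : 0 ≤ x^3 - 15*x^2 - 126*x + 32 := by
  nlinarith [sq_nonneg (x - 21), sq_nonneg x]

lemma key_S {x : ℝ} (hx : 21 ≤ x) :
    (x-1)*((3/(x-1)) - (3/(x-1))^2/2 + (3/(x-1))^3/3 + (3/(x-1))^4/(1-3/(x-1))) + 4/x ≤ 3 := by
  have h1 : (0:ℝ) < x - 1 := by linarith
  have h4 : (0:ℝ) < x - 4 := by linarith
  have hx0 : (0:ℝ) < x := by linarith
  have hu : 1 - 3/(x-1) = (x-4)/(x-1) := by field_simp; ring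
  have heq : 3 - ((x-1)*((3/(x-1)) - (3/(x-1))^2/2 + (3/(x-1))^3/3 + (3/(x-1))^4/(1-3/(x-1))) + 4/x)
      = (x^3 - 15*x^2 - 126*x + 32)/(2*x*(x-1)^2*(x-4)) := by
    rw [hu]; field_simp; ring
  have h2 : 0 ≤ (x^3 - 15*x^2 - 126*x + 32)/(2*x*(x-1)^2*(x-4)) :=
    div_nonneg (key_poly hx) (by positivity)
  linarith [heq ▸ h2]

lemma log_one_add_le {u : ℝ} (hu0 : 0 ≤ u) (hu1 : u < 1) :
    log (1+u) ≤ u - u^2/2 + u^3/3 + u^4/(1-u) := by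
  have h := Real.abs_log_sub_add_sum_range_le (x := -u) (by rwa [abs_neg, abs_of_nonneg hu0]) 3
  rw [abs_neg, abs_of_nonneg hu0] at h
  have hs : (∑ i ∈ Finset.range 3, (-u) ^ (i + 1) / (i + 1)) = -u + u^2/2 - u^3/3 := by
    simp [Finset.sum_range_succ]; ring
  rw [hs, sub_neg_eq_add] at h
  have := (abs_le.mp h).2
  linarith

lemma exp3_lb : (20.085:ℝ) ≤ exp 3 := by
  rw [show (3:ℝ) = (3:ℕ) by norm_num, ← Real.exp_one_pow]; exact exp_cube_lb

lemma key_nat_ineq {n : ℕ} (hn : 2 ≤ n) :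
    ((n:ℝ)+2)^(n+1) ≤ exp 1 ^ 3 * (n:ℝ)^2 * ((n:ℝ)-1)^(n-1) := by
  rcases le_or_gt n 20 with hsmall | hbig
  · interval_cases n <;> norm_num <;> nlinarith [exp3_lb]
  · have hN : (21:ℝ) ≤ (n:ℝ) := by exact_mod_cast hbig
    set N : ℝ := (n:ℝ) with hNdef
    have hN1 : (0:ℝ) < N - 1 := by linarith
    have hN0 : (0:ℝ) < N := by linarith
    set u : ℝ := 3/(N-1) with hudef
    have hu0 : 0 ≤ u := by positivity
    have hu1 : u < 1 := by
      rw [hudef, div_lt_one hN1]; linarith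
    set S : ℝ := u - u^2/2 + u^3/3 + u^4/(1-u) with hSdef
    have h1u : (1:ℝ) + u ≤ exp S := by
      have := log_one_add_le hu0 hu1
      calc (1:ℝ)+u = exp (log (1+u)) := (Real.exp_log (by linarith)).symm
        _ ≤ exp S := Real.exp_le_exp.mpr this
    have hcast : ((n-1 : ℕ) : ℝ) = N - 1 := by
      push_cast [Nat.cast_sub (by omega : 1 ≤ n)]; ring
    have hA : (1+u)^(n-1) ≤ exp ((N-1) * S) := by
      calc (1+u)^(n-1) ≤ (exp S)^(n-1) := pow_le_pow_left₀ (by linarith) h1u _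
        _ = exp (((n-1:ℕ):ℝ) * S) := by rw [← Real.exp_nat_mul]
        _ = exp ((N-1) * S) := by rw [hcast]
    have hB : (1+2/N)^2 ≤ exp (4/N) := by
      have h2 : (1:ℝ) + 2/N ≤ exp (2/N) := by
        have := Real.add_one_le_exp (2/N); linarith
      calc (1+2/N)^2 ≤ (exp (2/N))^2 := pow_le_pow_left₀ (by positivity) h2 2
        _ = exp (4/N) := by rw [← Real.exp_nat_mul]; norm_num; ring_nf
    have hS3 : (N-1) * S + 4/N ≤ 3 := key_S hN
    have hfact1 : (1+u)*(N-1) = N+2 := by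
      rw [hudef]; field_simp; ring
    have hfact2 : (1+2/N)*N = N+2 := by field_simp
    calc (N+2)^(n+1) = (1+u)^(n-1)*(N-1)^(n-1) * ((1+2/N)^2 * N^2) := by
          have he : (1+u)^(n-1)*(N-1)^(n-1) * ((1+2/N)^2*N^2) = (N+2)^(n-1) * (N+2)^2 := by
            rw [← mul_pow, hfact1, ← mul_pow, hfact2]
          rw [he, ← pow_add]; congr 1; omega
      _ ≤ exp ((N-1)*S) * (N-1)^(n-1) * (exp (4/N) * N^2) := by
          apply mul_le_mul (mul_le_mul hA le_rfl (by positivity) (by positivity))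
            (mul_le_mul hB le_rfl (by positivity) (by positivity)) (by positivity) (by positivity)
      _ = exp ((N-1)*S + 4/N) * (N^2*(N-1)^(n-1)) := by rw [Real.exp_add]; ring
      _ ≤ exp 3 * (N^2*(N-1)^(n-1)) :=
          mul_le_mul_of_nonneg_right (Real.exp_le_exp.mpr hS3) (by positivity)
      _ = exp 1^3 * N^2 * (N-1)^(n-1) := by
          rw [show (3:ℝ)=(3:ℕ) by norm_num, ← Real.exp_one_pow]; ring


lemma cauchy_est {F : ℂ → ℂ} (hF : DifferentiableOn ℂ F (ball 0 1)) {r C : ℝ}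
    (hr0 : 0 < r) (hr1 : r < 1)
    (hC : ∀ z : ℂ, ‖z‖ = r → ‖F z‖ ≤ C) (m : ℕ) :
    ‖iteratedDeriv m F 0‖ ≤ m.factorial * C / r ^ m := by
  have hC0 : 0 ≤ C := le_trans (norm_nonneg _) (hC (r:ℂ) (by
    simp [Complex.norm_real, abs_of_pos hr0]))
  set R : NNReal := ⟨r, hr0.le⟩ with hR
  have hd : DifferentiableOn ℂ F (closedBall 0 R) :=
    hF.mono (closedBall_subset_ball (by exact hr1))
  have hps : HasFPowerSeriesOnBall F (cauchyPowerSeries F 0 R) 0 R :=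
    hd.hasFPowerSeriesOnBall (NNReal.coe_pos.mp (by exact hr0))
  -- iterated deriv via coefficients
  have hid : (m.factorial : ℝ) * ‖(cauchyPowerSeries F 0 R m) (fun _ => (1:ℂ))‖
      = ‖iteratedDeriv m F 0‖ := by
    rw [iteratedDeriv_eq_iteratedFDeriv, ← hps.factorial_smul (1:ℂ) m]
    simp [norm_mul]
  have hRr : (R : ℝ) = r := rfl
  have mapsto : ∀ θ : ℝ, circleMap 0 r θ ∈ ball (0:ℂ) 1 := fun θ => by
    simp [mem_ball_zero_iff, abs_of_pos hr0, hr1]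
  have hcont : Continuous fun θ : ℝ => ‖F (circleMap 0 r θ)‖ :=
    (hF.continuousOn.comp_continuous (continuous_circleMap 0 r) mapsto).norm
  have hI : IntervalIntegrable (fun θ : ℝ => ‖F (circleMap 0 r θ)‖)
      MeasureTheory.volume 0 (2*Real.pi) := hcont.intervalIntegrable _ _
  have hint : (∫ θ : ℝ in (0)..2*Real.pi, ‖F (circleMap 0 r θ)‖) ≤ 2*Real.pi*C := by
    have := intervalIntegral.integral_mono_on (Real.two_pi_pos.le) hI
      (intervalIntegrable_const (c := C)) (fun θ _ => by
        simpa [] using hC _ (by simp [abs_of_pos hr0]))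
    simpa using this
  have hnorm : ‖cauchyPowerSeries F 0 R m‖ ≤ C / r ^ m := by
    have h1 := norm_cauchyPowerSeries_le F 0 (R:ℝ) m
    have h2 : ((2*Real.pi)⁻¹ * ∫ θ : ℝ in (0)..2*Real.pi, ‖F (circleMap 0 (R:ℝ) θ)‖)
        * |(R:ℝ)|⁻¹ ^ m ≤ C / r ^ m := by
      rw [hRr, abs_of_pos hr0]
      have hle : (2*Real.pi)⁻¹ * (∫ θ : ℝ in (0)..2*Real.pi, ‖F (circleMap 0 r θ)‖) ≤ C := by
        rw [inv_mul_le_iff₀ Real.two_pi_pos]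
        linarith [hint]
      calc ((2*Real.pi)⁻¹ * ∫ θ : ℝ in (0)..2*Real.pi, ‖F (circleMap 0 r θ)‖) * r⁻¹ ^ m
          ≤ C * r⁻¹ ^ m := by
            apply mul_le_mul_of_nonneg_right hle (by positivity)
        _ = C / r ^ m := by rw [inv_pow, div_eq_mul_inv]
    exact le_trans h1 h2
  have happ : ‖(cauchyPowerSeries F 0 R m) (fun _ => (1:ℂ))‖ ≤ C / r ^ m := by
    calc ‖(cauchyPowerSeries F 0 R m) (fun _ => (1:ℂ))‖
        = ‖(cauchyPowerSeries F 0 R m) (fun _ => (1:ℂ))‖ := rfl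
      _ ≤ ‖cauchyPowerSeries F 0 R m‖ * ∏ _i : Fin m, ‖(1:ℂ)‖ :=
          (cauchyPowerSeries F 0 R m).le_opNorm _
      _ = ‖cauchyPowerSeries F 0 R m‖ := by simp
      _ ≤ C / r ^ m := hnorm
  calc ‖iteratedDeriv m F 0‖
      = (m.factorial : ℝ) * ‖(cauchyPowerSeries F 0 R m) (fun _ => (1:ℂ))‖ := hid.symm
    _ ≤ (m.factorial : ℝ) * (C / r ^ m) := by
        apply mul_le_mul_of_nonneg_left happ (by positivity)
    _ = m.factorial * C / r ^ m := by ring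



lemma mobius_identity (c w : ℂ) :
    ‖1 - (starRingEnd ℂ) c * w‖^2 - ‖w - c‖^2
      = (1 - ‖c‖^2) * (1 - ‖w‖^2) := by
  rw [Complex.sq_norm, Complex.sq_norm, Complex.sq_norm, Complex.sq_norm]
  simp only [Complex.normSq_apply, Complex.sub_re, Complex.sub_im, Complex.mul_re,
    Complex.mul_im, Complex.one_re, Complex.one_im, Complex.conj_re, Complex.conj_im]
  ring

lemma schwarz_pick {ω : ℂ → ℂ} (hω : DifferentiableOn ℂ ω (ball 0 1))
    (hmap : ∀ z ∈ ball (0:ℂ) 1, ‖ω z‖ < 1) {z : ℂ} (hz : z ∈ ball (0:ℂ) 1) :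
    (1 - ‖z‖^2) * (1 - ‖ω 0‖) ≤
      (1 + ‖ω 0‖) * (1 - ‖ω z‖^2) := by
  have h01 : (0:ℂ) ∈ ball (0:ℂ) 1 := by simp
  set c : ℂ := ω 0 with hc
  have hc1 : ‖c‖ < 1 := hmap 0 h01
  have hden : ∀ x ∈ ball (0:ℂ) 1, 1 - (starRingEnd ℂ) c * ω x ≠ 0 := by
    intro x hx h0
    have h1 : ‖(starRingEnd ℂ) c * ω x‖ < 1 := by
      rw [norm_mul, Complex.norm_conj]
      calc ‖c‖ * ‖ω x‖ ≤ 1 * ‖ω x‖ :=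
          mul_le_mul_of_nonneg_right hc1.le (norm_nonneg _)
        _ < 1 := by simpa using hmap x hx
    rw [sub_eq_zero] at h0
    rw [← h0] at h1
    simp at h1
  set F : ℂ → ℂ := fun x => (ω x - c) / (1 - (starRingEnd ℂ) c * ω x) with hF
  have hFd : DifferentiableOn ℂ F (ball 0 1) :=
    DifferentiableOn.div (hω.sub_const c)
      ((differentiableOn_const 1).sub ((differentiableOn_const _).mul hω)) hden
  have habs : ∀ x ∈ ball (0:ℂ) 1,
      ‖ω x - c‖ < ‖1 - (starRingEnd ℂ) c * ω x‖ := by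
    intro x hx
    have hpos : 0 < (1 - ‖c‖^2) * (1 - ‖ω x‖^2) := by
      apply mul_pos <;> nlinarith [hmap x hx, norm_nonneg (ω x), norm_nonneg c]
    have := mobius_identity c (ω x)
    apply lt_of_pow_lt_pow_left₀ 2 (norm_nonneg _)
    linarith
  have hFmap : MapsTo F (ball 0 1) (ball 0 1) := by
    intro x hx
    rw [mem_ball_zero_iff, hF]
    have hd0 : ‖1 - (starRingEnd ℂ) c * ω x‖ ≠ 0 :=
      norm_ne_zero_iff.mpr (hden x hx)
    simp only [norm_div]
    rw [div_lt_one (lt_of_le_of_ne (norm_nonneg _) (Ne.symm hd0))]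
    exact habs x hx
  have hF0 : F 0 = 0 := by simp [hF, ← hc]
  have hsch : ‖F z‖ ≤ ‖z‖ :=
    Complex.norm_le_norm_of_mapsTo_ball hFd (hFmap.mono_right ball_subset_closedBall) hF0 (mem_ball_zero_iff.mp hz)
  -- turn into |num| ≤ |z| |den|
  have hnum : ‖ω z - c‖ ≤ ‖z‖ * ‖1 - (starRingEnd ℂ) c * ω z‖ := by
    have hd0 : 0 < ‖1 - (starRingEnd ℂ) c * ω z‖ := by
      exact norm_pos_iff.mpr (hden z hz)
    rw [hF] at hsch
    simp only [norm_div] at hsch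
    calc ‖ω z - c‖
        = ‖ω z - c‖ / ‖1 - (starRingEnd ℂ) c * ω z‖
          * ‖1 - (starRingEnd ℂ) c * ω z‖ := by rw [div_mul_cancel₀ _ hd0.ne']
      _ ≤ ‖z‖ * ‖1 - (starRingEnd ℂ) c * ω z‖ :=
          mul_le_mul_of_nonneg_right hsch hd0.le
  have hid := mobius_identity c (ω z)
  have hz1 : ‖z‖ < 1 := mem_ball_zero_iff.mp hz
  have hdl : 1 - ‖c‖ ≤ ‖1 - (starRingEnd ℂ) c * ω z‖ := by
    have h1 : ‖(starRingEnd ℂ) c * ω z‖ ≤ ‖c‖ := by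
      rw [norm_mul, Complex.norm_conj]
      calc ‖c‖ * ‖ω z‖ ≤ ‖c‖ * 1 :=
          mul_le_mul_of_nonneg_left (hmap z hz).le (norm_nonneg _)
        _ = ‖c‖ := mul_one _
    calc 1 - ‖c‖ ≤ 1 - ‖(starRingEnd ℂ) c * ω z‖ := by linarith
      _ = ‖(1:ℂ)‖ - ‖(starRingEnd ℂ) c * ω z‖ := by simp
      _ ≤ ‖1 - (starRingEnd ℂ) c * ω z‖ := norm_sub_norm_le _ _
  -- now combine
  have hnum2 : ‖ω z - c‖^2 ≤
      ‖z‖^2 * ‖1 - (starRingEnd ℂ) c * ω z‖^2 := by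
    rw [← mul_pow]
    exact pow_le_pow_left₀ (norm_nonneg _) hnum 2
  have hden2 : (1 - ‖c‖)^2 ≤ ‖1 - (starRingEnd ℂ) c * ω z‖^2 :=
    pow_le_pow_left₀ (by linarith) hdl 2
  have hfin : (1 - ‖c‖^2) * (1 - ‖ω z‖^2) ≥
      (1 - ‖z‖^2) * (1 - ‖c‖)^2 := by
    have hz2 : 0 ≤ 1 - ‖z‖^2 := by nlinarith [norm_nonneg z]
    calc (1 - ‖c‖^2) * (1 - ‖ω z‖^2)
        = ‖1 - (starRingEnd ℂ) c * ω z‖^2 - ‖ω z - c‖^2 := hid.symm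
      _ ≥ ‖1 - (starRingEnd ℂ) c * ω z‖^2
          - ‖z‖^2 * ‖1 - (starRingEnd ℂ) c * ω z‖^2 := by linarith
      _ = (1 - ‖z‖^2) * ‖1 - (starRingEnd ℂ) c * ω z‖^2 := by ring
      _ ≥ (1 - ‖z‖^2) * (1 - ‖c‖)^2 :=
          mul_le_mul_of_nonneg_left hden2 hz2
  have hcpos : 0 < 1 - ‖c‖ := by linarith
  have hexp : 1 - ‖c‖^2 = (1 - ‖c‖) * (1 + ‖c‖) := by ring
  rw [hexp] at hfin
  have := le_of_mul_le_mul_left (by nlinarith [hfin] : 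
    (1 - ‖c‖) * ((1 - ‖z‖^2) * (1 - ‖c‖)) ≤ 
    (1 - ‖c‖) * ((1 + ‖c‖) * (1 - ‖ω z‖^2))) hcpos
  nlinarith [this]


open Filter

/-- Jacobian of the harmonic mapping `f = h + conj g`. -/
noncomputable def jacobian (h g : ℂ → ℂ) (z : ℂ) : ℝ :=
  ‖deriv h z‖ ^ 2 - ‖deriv g z‖ ^ 2

/-- The Bloch-type seminorm `β(f) = sup_{z ∈ 𝔻} (1 - |z|²) √|J_f(z)|`. -/
noncomputable def betaH (h g : ℂ → ℂ) : ℝ :=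
  sSup ((fun z => (1 - ‖z‖ ^ 2) * Real.sqrt |jacobian h g z|) '' Metric.ball 0 1)

/-- Membership in the Bloch-type class `B_H`, i.e. `β(f) < ∞`. -/
def InBH (h g : ℂ → ℂ) : Prop :=
  BddAbove ((fun z => (1 - ‖z‖ ^ 2) * Real.sqrt |jacobian h g z|) '' Metric.ball 0 1)



section main
variable {h g : ℂ → ℂ} {c₀ : ℂ}

lemma beta_nonneg (hh : True) (hβ : InBH h g) : 0 ≤ betaH h g := by
  have h0 : (0:ℂ) ∈ Metric.ball (0:ℂ) 1 := by simp
  have hle := le_csSup hβ (Set.mem_image_of_mem _ h0)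
  refine le_trans ?_ hle
  simp only [norm_zero]
  rw [sq, mul_zero, sub_zero, one_mul]
  positivity

lemma pointwise_bound
    (hh : DifferentiableOn ℂ h (Metric.ball 0 1))
    (hg : DifferentiableOn ℂ g (Metric.ball 0 1))
    (hsp : ∀ z ∈ Metric.ball (0 : ℂ) 1, ‖deriv g z‖ < ‖deriv h z‖)
    (hβ : InBH h g) (hc₀ : c₀ = deriv g 0 / deriv h 0) :
    ∀ z ∈ Metric.ball (0:ℂ) 1,
      (1 - ‖z‖^2)^3 * ‖deriv h z‖^2 * (1 - ‖c₀‖)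
        ≤ betaH h g^2 * (1 + ‖c₀‖) := by
  intro z hz
  have hH : ∀ x ∈ Metric.ball (0:ℂ) 1, 0 < ‖deriv h x‖ :=
    fun x hx => lt_of_le_of_lt (norm_nonneg _) (hsp x hx)
  have hne : ∀ x ∈ Metric.ball (0:ℂ) 1, deriv h x ≠ 0 :=
    fun x hx => norm_pos_iff.mp (hH x hx)
  set ω : ℂ → ℂ := fun x => deriv g x / deriv h x with hω
  have hωd : DifferentiableOn ℂ ω (Metric.ball 0 1) :=
    DifferentiableOn.div ((hg.analyticOnNhd isOpen_ball).deriv.differentiableOn)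
      ((hh.analyticOnNhd isOpen_ball).deriv.differentiableOn) hne
  have hωmap : ∀ x ∈ Metric.ball (0:ℂ) 1, ‖ω x‖ < 1 := by
    intro x hx
    rw [hω]; simp only [norm_div]
    rw [div_lt_one (hH x hx)]
    exact hsp x hx
  have hω0 : ω 0 = c₀ := hc₀.symm
  have SP := schwarz_pick hωd hωmap hz
  rw [hω0] at SP
  have habs : ‖deriv g z‖ = ‖ω z‖ * ‖deriv h z‖ := by
    rw [← norm_mul]; congr 1
    rw [hω]; field_simp [hne z hz]
  have hJ : jacobian h g z = ‖deriv h z‖^2 * (1 - ‖ω z‖^2) := by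
    simp only [jacobian]
    rw [habs]; ring
  have hJ0 : 0 ≤ jacobian h g z := by
    simp only [jacobian, sub_nonneg]
    exact pow_le_pow_left₀ (norm_nonneg _) (hsp z hz).le 2
  have hz1 : ‖z‖ < 1 := mem_ball_zero_iff.mp hz
  have hz2 : 0 ≤ 1 - ‖z‖^2 := by nlinarith [norm_nonneg z]
  have hb : (1 - ‖z‖^2) * Real.sqrt |jacobian h g z| ≤ betaH h g :=
    le_csSup hβ ⟨z, hz, rfl⟩
  have hsq : (1 - ‖z‖^2)^2 * jacobian h g z ≤ betaH h g ^2 := by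
    have h1 : ((1 - ‖z‖^2) * Real.sqrt |jacobian h g z|)^2 ≤ betaH h g ^2 :=
      pow_le_pow_left₀ (mul_nonneg hz2 (Real.sqrt_nonneg _)) hb 2
    rwa [mul_pow, Real.sq_sqrt (abs_nonneg _), abs_of_nonneg hJ0] at h1
  have hA0 : 0 ≤ (1 - ‖z‖^2)^2 * ‖deriv h z‖^2 := by positivity
  have hc1 : 0 ≤ 1 + ‖c₀‖ := by positivity
  calc (1 - ‖z‖^2)^3 * ‖deriv h z‖^2 * (1 - ‖c₀‖)
      = ((1 - ‖z‖^2)^2 * ‖deriv h z‖^2)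
        * ((1 - ‖z‖^2) * (1 - ‖c₀‖)) := by ring
    _ ≤ ((1 - ‖z‖^2)^2 * ‖deriv h z‖^2)
        * ((1 + ‖c₀‖) * (1 - ‖ω z‖^2)) :=
        mul_le_mul_of_nonneg_left SP hA0
    _ = (1 + ‖c₀‖) * ((1 - ‖z‖^2)^2 * jacobian h g z) := by
        rw [hJ]; ring
    _ ≤ (1 + ‖c₀‖) * betaH h g ^2 := mul_le_mul_of_nonneg_left hsq hc1
    _ = betaH h g^2 * (1 + ‖c₀‖) := by ring

/-- **Coefficient estimates in `B_H`.**  If `f = h + conj g` is sense-preserving with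
`β(f) < ∞`, `c₀ = g'(0)/h'(0)`, `aₙ = h⁽ⁿ⁾(0)/n!` and `bₙ = g⁽ⁿ⁾(0)/n!`, then for `n ≥ 2`:
`max{|aₙ|, |bₙ|} ≤ β(f)·(e/3)^{3/2}·√((1+|c₀|)/(1-|c₀|))·√(n+2)`. -/
theorem coefficient_estimates_BH (h g : ℂ → ℂ) (c₀ : ℂ)
    (hh : DifferentiableOn ℂ h (Metric.ball 0 1))
    (hg : DifferentiableOn ℂ g (Metric.ball 0 1))
    (hsp : ∀ z ∈ Metric.ball (0 : ℂ) 1, ‖deriv g z‖ < ‖deriv h z‖)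
    (hβ : InBH h g) (hc₀ : c₀ = deriv g 0 / deriv h 0) :
    ∀ n : ℕ, 2 ≤ n →
      max (‖iteratedDeriv n h 0 / (n.factorial : ℂ)‖)
          (‖iteratedDeriv n g 0 / (n.factorial : ℂ)‖)
        ≤ betaH h g * (Real.exp 1 / 3) ^ ((3 : ℝ) / 2)
            * Real.sqrt ((1 + ‖c₀‖) / (1 - ‖c₀‖))
            * Real.sqrt ((n : ℝ) + 2) := by
  intro n hn
  obtain ⟨m, rfl⟩ : ∃ m, n = m + 1 := ⟨n - 1, by omega⟩
  have hm1 : 1 ≤ m := by omega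
  set β := betaH h g with hβdef
  set c := ‖c₀‖ with hcdef
  have hc1 : c < 1 := by
    have h0 := hsp 0 (by simp)
    have hpos : 0 < ‖deriv h 0‖ := lt_of_le_of_lt (norm_nonneg _) h0
    rw [hcdef, hc₀, norm_div, div_lt_one hpos]
    exact h0
  have hc0 : 0 ≤ c := norm_nonneg _
  have hβ0 : 0 ≤ β := beta_nonneg trivial hβ
  set N : ℝ := ((m+1 : ℕ) : ℝ) with hNdef
  have hN2 : (2:ℝ) ≤ N := by rw [hNdef]; exact_mod_cast (by omega : 2 ≤ m+1)
  have hN1 : (0:ℝ) < N - 1 := by linarith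
  have hN20 : (0:ℝ) < N + 2 := by linarith
  set r : ℝ := Real.sqrt ((N-1)/(N+2)) with hrdef
  have hfrac0 : (0:ℝ) ≤ (N-1)/(N+2) := div_nonneg hN1.le hN20.le
  have hr2 : r^2 = (N-1)/(N+2) := Real.sq_sqrt hfrac0
  have hr0 : 0 < r := Real.sqrt_pos.mpr (div_pos hN1 hN20)
  have hr1 : r < 1 := by
    have : (N-1)/(N+2) < 1 := by rw [div_lt_one hN20]; linarith
    nlinarith [hr2, hr0]
  set Q : ℝ := (1+c)/(1-c) with hQdef
  have hQ0 : 0 ≤ Q := div_nonneg (by linarith) (by linarith)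
  set C : ℝ := Real.sqrt (β^2 * Q * ((N+2)/3)^3) with hCdef
  have hC0 : 0 ≤ C := Real.sqrt_nonneg _
  have hC2 : C^2 = β^2 * Q * ((N+2)/3)^3 := Real.sq_sqrt (by positivity)
  clear_value β c N r Q C
  -- sphere bound
  have hsb : ∀ z : ℂ, ‖z‖ = r → ‖deriv h z‖ ≤ C := by
    intro z hzr
    have hzball : z ∈ Metric.ball (0:ℂ) 1 := by
      rw [mem_ball_zero_iff, hzr]; exact hr1
    have hpw := pointwise_bound hh hg hsp hβ hc₀ z hzball
    rw [← hcdef, ← hβdef] at hpw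
    rw [hzr, hr2] at hpw
    have h3 : (1 : ℝ) - (N-1)/(N+2) = 3/(N+2) := by field_simp; ring
    rw [h3] at hpw
    have hsq : ‖deriv h z‖^2 ≤ C^2 := by
      rw [hC2]
      have h4 : ‖deriv h z‖^2 =
          ((3/(N+2))^3 * ‖deriv h z‖^2 * (1-c)) * (((N+2)/3)^3 / (1-c)) := by
        have hc2 : (0:ℝ) < 1 - c := by linarith
        field_simp
      rw [h4]
      calc ((3/(N+2))^3 * ‖deriv h z‖^2 * (1-c)) * (((N+2)/3)^3 / (1-c))
          ≤ (β^2 * (1+c)) * (((N+2)/3)^3 / (1-c)) :=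
            mul_le_mul_of_nonneg_right hpw (div_nonneg (by positivity) (by linarith))
        _ = β^2 * Q * ((N+2)/3)^3 := by rw [hQdef]; field_simp
    calc ‖deriv h z‖ = Real.sqrt (‖deriv h z‖^2) :=
          (Real.sqrt_sq (norm_nonneg _)).symm
      _ ≤ Real.sqrt (C^2) := Real.sqrt_le_sqrt hsq
      _ = C := Real.sqrt_sq hC0
  have hsbg : ∀ z : ℂ, ‖z‖ = r → ‖deriv g z‖ ≤ C := by
    intro z hzr
    have hzball : z ∈ Metric.ball (0:ℂ) 1 := by
      rw [mem_ball_zero_iff, hzr]; exact hr1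
    exact le_trans (hsp z hzball).le (hsb z hzr)
  -- Cauchy estimates
  have hdh : DifferentiableOn ℂ (deriv h) (Metric.ball 0 1) :=
    (hh.analyticOnNhd isOpen_ball).deriv.differentiableOn
  have hdg : DifferentiableOn ℂ (deriv g) (Metric.ball 0 1) :=
    (hg.analyticOnNhd isOpen_ball).deriv.differentiableOn
  have cauh := cauchy_est hdh hr0 hr1 hsb m
  have caug := cauchy_est hdg hr0 hr1 hsbg m
  have hfacpos : (0:ℝ) < ((m+1).factorial : ℝ) := by positivity
  have hff : (((m+1).factorial : ℝ)) = N * (m.factorial : ℝ) := by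
    rw [Nat.factorial_succ, hNdef]; push_cast; ring
  have hcoeff : ∀ F : ℂ → ℂ, ‖iteratedDeriv m (deriv F) 0‖ ≤ m.factorial * C / r^m →
      ‖iteratedDeriv (m+1) F 0 / (((m+1).factorial : ℕ) : ℂ)‖ ≤ C / (N * r^m) := by
    intro F hF
    rw [iteratedDeriv_succ', norm_div, Complex.norm_natCast]
    calc ‖iteratedDeriv m (deriv F) 0‖ / ((m+1).factorial : ℝ)
        ≤ (m.factorial * C / r^m) / ((m+1).factorial : ℝ) :=
          (div_le_div_iff_of_pos_right hfacpos).mpr hF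
      _ = C / (N * r^m) := by
          rw [hff]
          have hfm : (0:ℝ) < (m.factorial : ℝ) := by positivity
          field_simp
  -- final numeric inequality
  set RHS : ℝ := β * (Real.exp 1 / 3) ^ ((3 : ℝ) / 2) * Real.sqrt Q * Real.sqrt (N + 2)
    with hRHSdef
  clear_value RHS
  have hrpow0 : (0:ℝ) ≤ (Real.exp 1 / 3) ^ ((3 : ℝ) / 2) :=
    Real.rpow_nonneg (by positivity) _
  have hRHS0 : 0 ≤ RHS := by
    rw [hRHSdef]
    have := Real.sqrt_nonneg Q
    have := Real.sqrt_nonneg (N+2)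
    positivity
  have hrpow2 : ((Real.exp 1/3)^((3:ℝ)/2))^2 = Real.exp 1^3/27 := by
    rw [← Real.rpow_natCast ((Real.exp 1/3)^((3:ℝ)/2)) 2, ← Real.rpow_mul (by positivity)]
    norm_num
    rw [div_pow]
    norm_num
  have key := key_nat_ineq (show 2 ≤ m+1 by omega)
  rw [show m+1-1 = m by omega, show m+1+1 = m+2 by omega, ← hNdef] at key
  -- key : (N+2)^(m+2) ≤ exp 1^3 * N^2 * (N-1)^m
  have hfin : C / (N * r^m) ≤ RHS := by
    have hL0 : 0 ≤ C / (N * r^m) := by positivity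
    have hsqf : (C / (N * r^m))^2 ≤ RHS^2 := by
      have hR2 : RHS^2 = β^2 * (Real.exp 1^3/27) * Q * (N+2) := by
        rw [hRHSdef, mul_pow, mul_pow, mul_pow, hrpow2, Real.sq_sqrt hQ0,
          Real.sq_sqrt (by linarith : (0:ℝ) ≤ N+2)]
      have hrm : (r^m)^2 = (N-1)^m/(N+2)^m := by
        rw [← pow_mul, mul_comm m 2, pow_mul, hr2, div_pow]
      have hpows : (0:ℝ) < (N+2)^m := by positivity
      have main2 : β^2*Q*((N+2)^3/27) * (N+2)^m
          ≤ β^2*(Real.exp 1^3/27)*Q*(N+2)*N^2*(N-1)^m := by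
        have hmul := mul_le_mul_of_nonneg_left key
          (show (0:ℝ) ≤ β^2*Q*(N+2)/27 by positivity)
        calc β^2*Q*((N+2)^3/27)*(N+2)^m = β^2*Q*(N+2)/27 * (N+2)^(m+2) := by
              rw [pow_add]; ring
          _ ≤ β^2*Q*(N+2)/27 * (Real.exp 1^3 * N^2 * (N-1)^m) := hmul
          _ = β^2*(Real.exp 1^3/27)*Q*(N+2)*N^2*(N-1)^m := by ring
      rw [div_pow, hC2, hR2, mul_pow, hrm]
      have hdenpos : (0:ℝ) < N^2 * ((N-1)^m/(N+2)^m) :=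
        mul_pos (by positivity) (div_pos (pow_pos hN1 m) (pow_pos hN20 m))
      rw [div_le_iff₀ hdenpos]
      rw [show β^2 * (Real.exp 1^3/27) * Q * (N+2) * (N^2 * ((N-1)^m/(N+2)^m))
          = (β^2 * (Real.exp 1^3/27) * Q * (N+2) * (N^2 * (N-1)^m))/(N+2)^m from by ring]
      rw [le_div_iff₀ (pow_pos hN20 m)]
      nlinarith [main2]
    calc C / (N * r^m) = Real.sqrt ((C / (N * r^m))^2) := (Real.sqrt_sq hL0).symm
      _ ≤ Real.sqrt (RHS^2) := Real.sqrt_le_sqrt hsqf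
      _ = RHS := Real.sqrt_sq hRHS0
  have goal_h := le_trans (hcoeff h cauh) hfin
  have goal_g := le_trans (hcoeff g caug) hfin
  exact max_le goal_h goal_g


end main
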